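/- Let numbers a_1, a_2, … ∈ [0,∞) and ε > 0 satisfy a_{m+n} ≤ √(a_m² + a_n²) + ε for all m, n ∈ {1,2,…}. Then a_n ≤ (a_1 + (√2/(√2−1)) ε) √n for all n. -/

import Mathlib

/-- popcount -/
def pcAux : ℕ → ℕ
  | 0 => 0
  | n + 1 => pcAux ((n + 1) / 2) + (n + 1) % 2
decreasing_by exact Nat.div_lt_self (Nat.succ_pos n) one_lt_two

lemma pcAux_zero : pcAux 0 = 0 := by simp [pcAux]

lemma pcAux_step (n : ℕ) : pcAux n = pcAux (n / 2) + n % 2 := by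
  match n with
  | 0 => simp [pcAux]
  | n + 1 => rw [pcAux]

lemma pcAux_one : pcAux 1 = 1 := by
  rw [pcAux_step]; simp [pcAux_zero]

lemma pcAux_pow_add : ∀ k r, r < 2 ^ k → pcAux (2 ^ k + r) = pcAux r + 1 := by
  intro k
  induction k with
  | zero =>
    intro r hr
    interval_cases r
    simp [pcAux_one, pcAux_zero]
  | succ k ih =>
    intro r hr
    have h2 : 2 ^ (k + 1) + r = 2 * (2 ^ k + r / 2) + r % 2 := by omega
    rw [h2, pcAux_step]
    have hd : (2 * (2 ^ k + r / 2) + r % 2) / 2 = 2 ^ k + r / 2 := by omega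
    have hm : (2 * (2 ^ k + r / 2) + r % 2) % 2 = r % 2 := by omega
    rw [hd, hm, ih (r / 2) (by omega)]
    rw [pcAux_step r]
    ring

lemma pcAux_pow (k : ℕ) : pcAux (2 ^ k) = 1 := by
  have := pcAux_pow_add k 0 (by positivity)
  simpa [pcAux_zero] using this

lemma two_pow_pcAux_le : ∀ n, 2 ^ pcAux n ≤ n + 1 := by
  intro n
  induction n using Nat.strong_induction_on with
  | _ n ih =>
    rcases Nat.eq_zero_or_pos n with h0 | h0
    · subst h0; simp [pcAux_zero]
    · rw [pcAux_step n]
      have hih := ih (n / 2) (Nat.div_lt_self h0 one_lt_two)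
      rcases Nat.even_or_odd n with he | ho
      · have hp : n % 2 = 0 := Nat.even_iff.mp he
        rw [hp, Nat.add_zero]
        omega
      · have hp : n % 2 = 1 := Nat.odd_iff.mp ho
        rw [hp, pow_add, pow_one]
        omega

lemma one_le_pcAux : ∀ n, 1 ≤ n → 1 ≤ pcAux n := by
  intro n
  induction n using Nat.strong_induction_on with
  | _ n ih =>
    intro hn
    rw [pcAux_step n]
    rcases Nat.even_or_odd n with he | ho
    · have hp : n % 2 = 0 := Nat.even_iff.mp he
      have h2 : 1 ≤ n / 2 := by omega
      have := ih (n / 2) (Nat.div_lt_self (by omega) one_lt_two) h2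
      omega
    · have hp : n % 2 = 1 := Nat.odd_iff.mp ho
      omega

lemma sq_lt_two_pow : ∀ s : ℕ, s ^ 2 < 2 ^ (s + 1) := by
  intro s
  induction s with
  | zero => norm_num
  | succ s ih =>
    rcases Nat.lt_or_ge s 3 with hs | hs
    · interval_cases s <;> norm_num
    · have h1 : s < 2 ^ s := Nat.lt_two_pow_self (n := s)
      have hp : 2 ^ (s + 1) = 2 * 2 ^ s := by ring
      have hp2 : 2 ^ (s + 2) = 2 * 2 ^ (s + 1) := by ring
      have h2 : 2 * s + 1 < 2 ^ (s + 1) := by omega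
      calc (s + 1) ^ 2 = s ^ 2 + (2 * s + 1) := by ring
        _ < 2 ^ (s + 1) + 2 ^ (s + 1) := by omega
        _ = 2 ^ (s + 2) := by omega

lemma pcAux_sub_one_sq_le (n : ℕ) (hn : 1 ≤ n) : (pcAux n - 1) ^ 2 ≤ n := by
  have h1 := one_le_pcAux n hn
  have h2 := two_pow_pcAux_le n
  obtain ⟨t, ht⟩ : ∃ t, pcAux n = t + 1 := ⟨pcAux n - 1, by omega⟩
  have h3 := sq_lt_two_pow t
  rw [ht] at h2 ⊢
  simp only [Nat.add_sub_cancel]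
  omega

lemma sqrt_shift (x y q : ℝ) (hy : 0 ≤ y) (hq : 0 ≤ q) :
    Real.sqrt (x ^ 2 + (y + q) ^ 2) ≤ Real.sqrt (x ^ 2 + y ^ 2) + q := by
  have hw : Real.sqrt (x ^ 2 + y ^ 2) ^ 2 = x ^ 2 + y ^ 2 := Real.sq_sqrt (by positivity)
  have hw0 : 0 ≤ Real.sqrt (x ^ 2 + y ^ 2) := Real.sqrt_nonneg _
  have hy' : y ≤ Real.sqrt (x ^ 2 + y ^ 2) := by
    have h1 : Real.sqrt (y ^ 2) ≤ Real.sqrt (x ^ 2 + y ^ 2) :=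
      Real.sqrt_le_sqrt (by nlinarith [sq_nonneg x])
    rwa [Real.sqrt_sq hy] at h1
  have h1 : x ^ 2 + (y + q) ^ 2 ≤ (Real.sqrt (x ^ 2 + y ^ 2) + q) ^ 2 := by nlinarith
  calc Real.sqrt (x ^ 2 + (y + q) ^ 2) ≤ Real.sqrt ((Real.sqrt (x ^ 2 + y ^ 2) + q) ^ 2) :=
        Real.sqrt_le_sqrt h1
    _ = _ := Real.sqrt_sq (by positivity)

lemma sqrt_shrink (u v p : ℝ) (hp : 0 ≤ p) (hu : p ≤ u) (hv : p ≤ v) :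
    Real.sqrt ((u - p) ^ 2 + (v - p) ^ 2) ≤ Real.sqrt (u ^ 2 + v ^ 2) - p := by
  have hu0 : 0 ≤ u := hp.trans hu
  have hv0 : 0 ≤ v := hp.trans hv
  set w := Real.sqrt (u ^ 2 + v ^ 2) with hw
  have hw2 : w ^ 2 = u ^ 2 + v ^ 2 := Real.sq_sqrt (by positivity)
  have hw0 : 0 ≤ w := Real.sqrt_nonneg _
  have hwu : u ≤ w := by
    have h1 : Real.sqrt (u ^ 2) ≤ w := Real.sqrt_le_sqrt (by nlinarith [sq_nonneg v])
    rwa [Real.sqrt_sq hu0] at h1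
  have hkey : w ≤ u + v - p / 2 := by
    have h1 : w ^ 2 ≤ (u + v - p / 2) ^ 2 := by
      nlinarith [mul_nonneg (sub_nonneg.2 hu) hv0, mul_nonneg (sub_nonneg.2 hv) hu0, sq_nonneg p]
    have h2 : 0 ≤ u + v - p / 2 := by linarith
    nlinarith
  have hgoal2 : (u - p) ^ 2 + (v - p) ^ 2 ≤ (w - p) ^ 2 := by nlinarith
  have hwp : 0 ≤ w - p := by linarith
  calc Real.sqrt ((u - p) ^ 2 + (v - p) ^ 2) ≤ Real.sqrt ((w - p) ^ 2) :=
        Real.sqrt_le_sqrt hgoal2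
    _ = w - p := Real.sqrt_sq hwp

lemma key_main (a : ℕ → ℝ) (ε : ℝ) (hε : 0 < ε)
    (ha : ∀ n, 1 ≤ n → 0 ≤ a n)
    (h : ∀ m n, 1 ≤ m → 1 ≤ n → a (m + n) ≤ Real.sqrt ((a m) ^ 2 + (a n) ^ 2) + ε) :
    ∀ n, 1 ≤ n → a n ≤ (a 1 + ε * (Real.sqrt 2 + 1)) * Real.sqrt n
      + ε * ((pcAux n : ℝ) - 1 - (Real.sqrt 2 + 1)) := by
  have hs2 : Real.sqrt 2 ^ 2 = 2 := Real.sq_sqrt (by norm_num)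
  have hs20 : (0:ℝ) ≤ Real.sqrt 2 := Real.sqrt_nonneg 2
  have ha1 : 0 ≤ a 1 := ha 1 le_rfl
  set s2 := Real.sqrt 2 with hs2def
  set A := a 1 + ε * (s2 + 1) with hAdef
  have hp0 : 0 ≤ ε * (s2 + 1) := by positivity
  have hApos : ε * (s2 + 1) ≤ A := by nlinarith
  have hA0 : 0 ≤ A := le_trans hp0 hApos
  intro n
  induction n using Nat.strong_induction_on with
  | _ n ih =>
    intro hn
    rcases eq_or_lt_of_le hn with h1 | hn2
    · -- base case n = 1
      rw [← h1, pcAux_one]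
      push_cast
      rw [Real.sqrt_one]
      nlinarith
    · -- n ≥ 2
      have hn2' : 2 ≤ n := hn2
      set k := Nat.log 2 n with hkdef
      have hk1 : 2 ^ k ≤ n := Nat.pow_log_le_self 2 (by omega)
      have hk2 : n < 2 ^ (k + 1) := Nat.lt_pow_succ_log_self one_lt_two n
      have hkpow : 2 ^ (k + 1) = 2 ^ k * 2 := pow_succ 2 k
      have hkpos : 1 ≤ k := by
        by_contra hc
        have hk0 : k = 0 := by omega
        rw [hk0] at hk2
        norm_num at hk2
        omega
      have hrlt : n - 2 ^ k < 2 ^ k := by omega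
      have hneq : n = 2 ^ k + (n - 2 ^ k) := by omega
      set r := n - 2 ^ k with hrdef
      have hpcn : pcAux n = pcAux r + 1 := by rw [hneq]; exact pcAux_pow_add k r hrlt
      rcases Nat.eq_zero_or_pos r with hr0 | hr1
      · -- r = 0 : n = 2^k is a power of two, split into halves
        set m := 2 ^ (k - 1) with hmdef
        have hm1 : 1 ≤ m := Nat.one_le_two_pow
        have h2m : 2 ^ k = m + m := by
          rw [hmdef, ← two_mul]
          rw [show 2 * 2 ^ (k - 1) = 2 ^ (k - 1 + 1) from (pow_succ' 2 (k-1)).symm]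
          congr 1
          omega
        have hmn : n = m + m := by omega
        have hmlt : m < n := by omega
        have hpcm : pcAux m = 1 := pcAux_pow (k - 1)
        have ham := ih m hmlt hm1
        rw [hpcm] at ham
        push_cast at ham
        have hsm1 : (1:ℝ) ≤ Real.sqrt m := by
          rw [show (1:ℝ) = Real.sqrt 1 from Real.sqrt_one.symm]
          exact Real.sqrt_le_sqrt (by exact_mod_cast hm1)
        have hamX : a m ≤ A * Real.sqrt m - ε * (s2 + 1) := by linarith [ham]
        have hX0 : 0 ≤ A * Real.sqrt m - ε * (s2 + 1) := by nlinarith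
        have hstep := h m m hm1 hm1
        rw [← hmn] at hstep
        have hsq : Real.sqrt (a m ^ 2 + a m ^ 2)
            ≤ s2 * (A * Real.sqrt m - ε * (s2 + 1)) := by
          have h1 : a m ^ 2 + a m ^ 2 ≤ 2 * (A * Real.sqrt m - ε * (s2 + 1)) ^ 2 := by
            nlinarith [ha m hm1]
          calc Real.sqrt (a m ^ 2 + a m ^ 2)
              ≤ Real.sqrt (2 * (A * Real.sqrt m - ε * (s2 + 1)) ^ 2) := Real.sqrt_le_sqrt h1
            _ = s2 * Real.sqrt ((A * Real.sqrt m - ε * (s2 + 1)) ^ 2) :=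
                Real.sqrt_mul (by norm_num) _
            _ = s2 * (A * Real.sqrt m - ε * (s2 + 1)) := by rw [Real.sqrt_sq hX0]
        have hsn : Real.sqrt n = s2 * Real.sqrt m := by
          have hcast : (n:ℝ) = 2 * (m:ℝ) := by rw [hmn]; push_cast; ring
          rw [hcast, Real.sqrt_mul (by norm_num)]
        rw [hpcn, hr0, pcAux_zero]
        push_cast
        rw [hsn]
        have hfin : a n ≤ s2 * (A * Real.sqrt m - ε * (s2 + 1)) + ε := by linarith
        nlinarith [Real.sqrt_nonneg (m:ℝ)]
      · -- r ≥ 1 : n = 2^k + r, use top-bit split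
        set m := 2 ^ k with hmdef
        have hm1 : 1 ≤ m := Nat.one_le_two_pow
        have hmlt : m < n := by omega
        have hrltn : r < n := by omega
        have hpcm : pcAux m = 1 := pcAux_pow k
        have hpcr1 : 1 ≤ pcAux r := one_le_pcAux r hr1
        have hpcr1' : (1:ℝ) ≤ (pcAux r : ℝ) := by exact_mod_cast hpcr1
        have ham := ih m hmlt hm1
        rw [hpcm] at ham
        push_cast at ham
        have har := ih r hrltn hr1
        have hsm1 : (1:ℝ) ≤ Real.sqrt m := by
          rw [show (1:ℝ) = Real.sqrt 1 from Real.sqrt_one.symm]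
          exact Real.sqrt_le_sqrt (by exact_mod_cast hm1)
        have hsr1 : (1:ℝ) ≤ Real.sqrt r := by
          rw [show (1:ℝ) = Real.sqrt 1 from Real.sqrt_one.symm]
          exact Real.sqrt_le_sqrt (by exact_mod_cast hr1)
        have hq0 : 0 ≤ ε * ((pcAux r : ℝ) - 1) := by
          apply mul_nonneg hε.le; linarith
        have hpu : ε * (s2 + 1) ≤ A * Real.sqrt m := by
          have h' : A ≤ A * Real.sqrt m := le_mul_of_one_le_right hA0 hsm1
          linarith
        have hpv : ε * (s2 + 1) ≤ A * Real.sqrt r := by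
          have h' : A ≤ A * Real.sqrt r := le_mul_of_one_le_right hA0 hsr1
          linarith
        have hamX : a m ≤ A * Real.sqrt m - ε * (s2 + 1) := by
          have h' : A * Real.sqrt m + ε * ((1:ℝ) - 1 - (s2 + 1))
              = A * Real.sqrt m - ε * (s2 + 1) := by ring
          linarith [ham]
        have harY : a r ≤ (A * Real.sqrt r - ε * (s2 + 1)) + ε * ((pcAux r : ℝ) - 1) := by
          have h' : A * Real.sqrt r + ε * ((pcAux r : ℝ) - 1 - (s2 + 1))
              = (A * Real.sqrt r - ε * (s2 + 1)) + ε * ((pcAux r : ℝ) - 1) := by ring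
          linarith [har]
        have hvp : 0 ≤ A * Real.sqrt r - ε * (s2 + 1) := by linarith
        have hstep := h m r hm1 hr1
        rw [← hneq] at hstep
        have hb1 : Real.sqrt (a m ^ 2 + a r ^ 2)
            ≤ Real.sqrt ((A * Real.sqrt m - ε * (s2 + 1)) ^ 2
                + ((A * Real.sqrt r - ε * (s2 + 1)) + ε * ((pcAux r : ℝ) - 1)) ^ 2) := by
          apply Real.sqrt_le_sqrt
          have hx1 : a m ^ 2 ≤ (A * Real.sqrt m - ε * (s2 + 1)) ^ 2 :=
            pow_le_pow_left₀ (ha m hm1) hamX 2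
          have hx2 : a r ^ 2
              ≤ ((A * Real.sqrt r - ε * (s2 + 1)) + ε * ((pcAux r : ℝ) - 1)) ^ 2 :=
            pow_le_pow_left₀ (ha r hr1) harY 2
          linarith
        have hb2 := sqrt_shift (A * Real.sqrt m - ε * (s2 + 1))
          (A * Real.sqrt r - ε * (s2 + 1)) (ε * ((pcAux r : ℝ) - 1)) hvp hq0
        have hb3 := sqrt_shrink (A * Real.sqrt m) (A * Real.sqrt r) (ε * (s2 + 1))
          hp0 hpu hpv
        have huv : Real.sqrt ((A * Real.sqrt m) ^ 2 + (A * Real.sqrt r) ^ 2)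
            = A * Real.sqrt n := by
          have hm2 : Real.sqrt (m:ℝ) ^ 2 = (m:ℝ) := Real.sq_sqrt (by positivity)
          have hr2 : Real.sqrt (r:ℝ) ^ 2 = (r:ℝ) := Real.sq_sqrt (by positivity)
          have hn2'' : Real.sqrt (n:ℝ) ^ 2 = (n:ℝ) := Real.sq_sqrt (by positivity)
          have hnmr : (n:ℝ) = (m:ℝ) + (r:ℝ) := by rw [hneq]; push_cast; ring
          have heq : (A * Real.sqrt m) ^ 2 + (A * Real.sqrt r) ^ 2
              = (A * Real.sqrt n) ^ 2 := by
            linear_combination A ^ 2 * hm2 + A ^ 2 * hr2 - A ^ 2 * hn2'' - A ^ 2 * hnmr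
          rw [heq, Real.sqrt_sq (by positivity)]
        rw [huv] at hb3
        rw [hpcn]
        push_cast
        linarith [hstep, hb1, hb2, hb3]

/-- Lemma 7.2: if nonnegative numbers `a_1, a_2, …` satisfy
`a_{m+n} ≤ √(a_m² + a_n²) + ε` for all `m, n ≥ 1`, then
`a_n ≤ (a_1 + (√2/(√2 - 1)) ε) √n` for all `n ≥ 1`. -/
theorem subadditive_sqrt_upper (a : ℕ → ℝ) (ε : ℝ) (hε : 0 < ε)
    (ha : ∀ n, 1 ≤ n → 0 ≤ a n)
    (h : ∀ m n, 1 ≤ m → 1 ≤ n → a (m + n) ≤ Real.sqrt ((a m) ^ 2 + (a n) ^ 2) + ε) :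
    ∀ n, 1 ≤ n →
      a n ≤ (a 1 + (Real.sqrt 2 / (Real.sqrt 2 - 1)) * ε) * Real.sqrt n := by
  have hs2 : Real.sqrt 2 ^ 2 = 2 := Real.sq_sqrt (by norm_num)
  have hs20 : (0:ℝ) ≤ Real.sqrt 2 := Real.sqrt_nonneg 2
  have hs2gt1 : 1 < Real.sqrt 2 := by nlinarith
  have hK : Real.sqrt 2 / (Real.sqrt 2 - 1) = Real.sqrt 2 + 2 := by
    rw [div_eq_iff (by linarith)]
    nlinarith
  intro n hn
  have hmain := key_main a ε hε ha h n hn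
  have hpc1 := one_le_pcAux n hn
  have hpc1' : (1:ℝ) ≤ (pcAux n : ℝ) := by exact_mod_cast hpc1
  have hpcsq := pcAux_sub_one_sq_le n hn
  have hcast : ((pcAux n - 1 : ℕ) : ℝ) = (pcAux n : ℝ) - 1 := by
    push_cast [hpc1]
    ring
  have hsq : ((pcAux n : ℝ) - 1) ^ 2 ≤ (n : ℝ) := by
    rw [← hcast]
    exact_mod_cast hpcsq
  have hle : (pcAux n : ℝ) - 1 ≤ Real.sqrt n := by
    have h1 : Real.sqrt (((pcAux n : ℝ) - 1) ^ 2) ≤ Real.sqrt n := Real.sqrt_le_sqrt hsq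
    rwa [Real.sqrt_sq (by linarith)] at h1
  have ha1 : 0 ≤ a 1 := ha 1 le_rfl
  rw [hK]
  nlinarith [mul_le_mul_of_nonneg_left hle hε.le, Real.sqrt_nonneg (n:ℝ)]
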